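/- Let H be a finite-dimensional Hopf algebra over a field K of characteristic zero and α a Hopf 2-cocycle on H. Define a right action of H on ^αH by x · h = S̃(h₁) ·_α x ·_α h₂ for x ∈ ^αH and h ∈ H. Then for all x ∈ ^αH and h ∈ H one has Δ(x · h) = (x₁ · h₂) ⊗ S(h₁)x₂h₃; in other words, ^αH with this action and the coaction Δ is a Yetter–Drinfeld module over H. -/

import Mathlib

open TensorProduct LinearMap

universe u

section HopfDefs

variable (K : Type u) [Field K]

/-- Convolution product of two linear maps from a coalgebra `C` to an algebra `A`. -/
noncomputable def convH {C A : Type u} [AddCommGroup C] [Module K C] [Coalgebra K C]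
    [Ring A] [Algebra K A] (f g : C →ₗ[K] A) : C →ₗ[K] A :=
  LinearMap.mul' K A ∘ₗ TensorProduct.map f g ∘ₗ Coalgebra.comul

variable (H : Type u) [Ring H] [HopfAlgebra K H]

/-- `x ⊗ y ↦ α(x₁ ⊗ y₁) • x₂ * y₂`, the multiplication of the cocycle deformation `^αH`. -/
noncomputable def aMul (α : H ⊗[K] H →ₗ[K] K) : H ⊗[K] H →ₗ[K] H :=
  convH K (Algebra.linearMap K H ∘ₗ α) (LinearMap.mul' K H)

/-- `x ⊗ (y ⊗ z) ↦ α(x₁,y₁) α(x₂y₂, z)` -/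
noncomputable def cocycleLHS (α : H ⊗[K] H →ₗ[K] K) : H ⊗[K] (H ⊗[K] H) →ₗ[K] K :=
  convH K
    (LinearMap.mul' K K ∘ₗ TensorProduct.map α Coalgebra.counit ∘ₗ
      (TensorProduct.assoc K H H H).symm.toLinearMap)
    (α ∘ₗ TensorProduct.map (LinearMap.mul' K H) LinearMap.id ∘ₗ
      (TensorProduct.assoc K H H H).symm.toLinearMap)

/-- `x ⊗ (y ⊗ z) ↦ α(y₁,z₁) α(x, y₂z₂)` -/
noncomputable def cocycleRHS (α : H ⊗[K] H →ₗ[K] K) : H ⊗[K] (H ⊗[K] H) →ₗ[K] K :=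
  convH K
    (LinearMap.mul' K K ∘ₗ TensorProduct.map Coalgebra.counit α)
    (α ∘ₗ TensorProduct.map LinearMap.id (LinearMap.mul' K H))

/-- A Hopf 2-cocycle on `H`: convolution invertible, satisfying the associativity (cocycle)
condition and the unity condition. -/
structure IsHopfCocycle (α : H ⊗[K] H →ₗ[K] K) : Prop where
  conv_invertible : ∃ β : H ⊗[K] H →ₗ[K] K,
    convH K α β = Coalgebra.counit ∧ convH K β α = Coalgebra.counit
  cocycle : cocycleLHS K H α = cocycleRHS K H α
  unit_left : ∀ x : H, α (1 ⊗ₜ[K] x) = Coalgebra.counit x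
  unit_right : ∀ x : H, α (x ⊗ₜ[K] 1) = Coalgebra.counit x

/-- `γ(x) = α(x₁, S(x₂))`. -/
noncomputable def cocycleGamma (α : H ⊗[K] H →ₗ[K] K) : H →ₗ[K] K :=
  α ∘ₗ TensorProduct.map LinearMap.id (HopfAlgebra.antipode (R := K)) ∘ₗ Coalgebra.comul

/-- The twisted antipode `S̃(x) = γ'(x₂) • S(x₁)`, where `γ'` is the convolution inverse
of `γ`. -/
noncomputable def tAntipode (γ' : H →ₗ[K] K) : H →ₗ[K] H :=
  convH K (HopfAlgebra.antipode (R := K)) (Algebra.linearMap K H ∘ₗ γ')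

/-- `A_f : x ↦ f(x₂) • x₁`, the action of `f ∈ H*` on `^αH`. -/
noncomputable def Af (f : H →ₗ[K] K) : H →ₗ[K] H :=
  convH K LinearMap.id (Algebra.linearMap K H ∘ₗ f)

/-- The map `M : x ⊗ y ↦ (x ·_α y₁) ⊗ y₂`. -/
noncomputable def Mmap (α : H ⊗[K] H →ₗ[K] K) : H ⊗[K] H →ₗ[K] H ⊗[K] H :=
  TensorProduct.map (aMul K H α) LinearMap.id ∘ₗ
    (TensorProduct.assoc K H H H).symm.toLinearMap ∘ₗ
      TensorProduct.map LinearMap.id Coalgebra.comul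

/-- The map `T : x ⊗ h ↦ (x ·_α S̃(h₁)) ⊗ h₂`. -/
noncomputable def Tmap (α : H ⊗[K] H →ₗ[K] K) (γ' : H →ₗ[K] K) :
    H ⊗[K] H →ₗ[K] H ⊗[K] H :=
  TensorProduct.map (aMul K H α) LinearMap.id ∘ₗ
    (TensorProduct.assoc K H H H).symm.toLinearMap ∘ₗ
      TensorProduct.map LinearMap.id
        (TensorProduct.map (tAntipode K H γ') LinearMap.id ∘ₗ Coalgebra.comul)

/-- `ν ↦ (x ↦ ν(x₁) • x₂)`. -/
noncomputable def nuMap (ν : H →ₗ[K] K) : H →ₗ[K] H :=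
  convH K (Algebra.linearMap K H ∘ₗ ν) LinearMap.id

/-- `φ : H →ₗ[K] H` is an isomorphism of `H`-comodule algebras `^αH → ^{α'}H`. -/
noncomputable def IsDeformIso (α α' : H ⊗[K] H →ₗ[K] K) (φ : H →ₗ[K] H) : Prop :=
  Function.Bijective φ ∧ φ 1 = 1 ∧
    φ ∘ₗ aMul K H α = aMul K H α' ∘ₗ TensorProduct.map φ φ ∧
    Coalgebra.comul ∘ₗ φ = TensorProduct.map φ LinearMap.id ∘ₗ (Coalgebra.comul (A := H))

end HopfDefs

/-- The right action of `H` on `^αH`: `x ⊗ h ↦ S̃(h₁) ·_α x ·_α h₂`. -/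
noncomputable def ydAct (K H : Type u) [Field K] [Ring H] [HopfAlgebra K H]
    (α : H ⊗[K] H →ₗ[K] K) (γ' : H →ₗ[K] K) : H ⊗[K] H →ₗ[K] H :=
  aMul K H α ∘ₗ
    TensorProduct.map (aMul K H α) LinearMap.id ∘ₗ
      TensorProduct.map (TensorProduct.comm K H H).toLinearMap LinearMap.id ∘ₗ
        (TensorProduct.assoc K H H H).symm.toLinearMap ∘ₗ
          TensorProduct.map LinearMap.id
            (TensorProduct.map (tAntipode K H γ') LinearMap.id ∘ₗ Coalgebra.comul)

/-- The rearrangement `(x₁ ⊗ x₂) ⊗ (h₁ ⊗ (h₂ ⊗ h₃)) ↦ (x₁ ⊗ h₂) ⊗ (h₁ ⊗ (x₂ ⊗ h₃))`. -/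
noncomputable def ydPerm (K H : Type u) [Field K] [Ring H] [HopfAlgebra K H] :
    (H ⊗[K] H) ⊗[K] (H ⊗[K] (H ⊗[K] H)) →ₗ[K] (H ⊗[K] H) ⊗[K] (H ⊗[K] (H ⊗[K] H)) :=
  (TensorProduct.tensorTensorTensorComm K H H H (H ⊗[K] H)).toLinearMap ∘ₗ
    TensorProduct.map LinearMap.id
      ((TensorProduct.assoc K H H H).toLinearMap ∘ₗ
        TensorProduct.map (TensorProduct.comm K H H).toLinearMap LinearMap.id ∘ₗ
          (TensorProduct.assoc K H H H).symm.toLinearMap) ∘ₗ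
      (TensorProduct.tensorTensorTensorComm K H H H (H ⊗[K] H)).toLinearMap

section Aux
variable {K H : Type u} [Field K] [Ring H] [HopfAlgebra K H]

open Coalgebra HopfAlgebra

lemma convH_repr {A : Type u} [Ring A] [Algebra K A] (f g : H →ₗ[K] A) {a : H}
    (ra : Coalgebra.Repr K a ιx1) :
    convH K f g a = ∑ i ∈ ra.index, f (ra.left i) * g (ra.right i) := by
  simp only [convH, LinearMap.comp_apply, ← ra.eq, map_sum, TensorProduct.map_tmul,
    LinearMap.mul'_apply]

lemma sum_counit_smul {a : H} (ra : Coalgebra.Repr K a ιx2) :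
    ∑ i ∈ ra.index, Coalgebra.counit (R := K) (ra.left i) • ra.right i = a := by
  have h := Coalgebra.sum_counit_tmul_eq (R := K) ra
  calc ∑ i ∈ ra.index, Coalgebra.counit (R := K) (ra.left i) • ra.right i
      = TensorProduct.lid K H (∑ i ∈ ra.index, Coalgebra.counit (R := K) (ra.left i) ⊗ₜ[K] ra.right i) := by
        rw [map_sum]; simp only [TensorProduct.lid_tmul]
    _ = a := by rw [h]; simp

lemma sum_smul_counit {a : H} (ra : Coalgebra.Repr K a ιx3) :
    ∑ i ∈ ra.index, Coalgebra.counit (R := K) (ra.right i) • ra.left i = a := by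
  have h := Coalgebra.sum_tmul_counit_eq (R := K) ra
  calc ∑ i ∈ ra.index, Coalgebra.counit (R := K) (ra.right i) • ra.left i
      = TensorProduct.rid K H (∑ i ∈ ra.index, ra.left i ⊗ₜ[K] Coalgebra.counit (R := K) (ra.right i)) := by
        rw [map_sum]; simp only [TensorProduct.rid_tmul]
    _ = a := by rw [h]; simp


lemma convH_unit_right {A : Type u} [Ring A] [Algebra K A] (f : H →ₗ[K] A) :
    convH K f (Algebra.linearMap K A ∘ₗ Coalgebra.counit) = f := by
  ext a
  rw [convH_repr f _ (Coalgebra.Repr.arbitrary K a)]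
  simp only [LinearMap.comp_apply, Algebra.linearMap_apply, Algebra.algebraMap_eq_smul_one]
  calc ∑ i ∈ (Coalgebra.Repr.arbitrary K a).index,
        f ((Coalgebra.Repr.arbitrary K a).left i) *
          (Coalgebra.counit (R := K) ((Coalgebra.Repr.arbitrary K a).right i) • (1 : A))
      = f (∑ i ∈ (Coalgebra.Repr.arbitrary K a).index,
          Coalgebra.counit (R := K) ((Coalgebra.Repr.arbitrary K a).right i) •
            (Coalgebra.Repr.arbitrary K a).left i) := by
        rw [map_sum]
        refine Finset.sum_congr rfl fun i _ => ?_
        rw [map_smul, mul_smul_comm, mul_one]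
    _ = f a := by rw [sum_smul_counit]

lemma convH_unit_left {A : Type u} [Ring A] [Algebra K A] (f : H →ₗ[K] A) :
    convH K (Algebra.linearMap K A ∘ₗ Coalgebra.counit) f = f := by
  ext a
  rw [convH_repr _ f (Coalgebra.Repr.arbitrary K a)]
  simp only [LinearMap.comp_apply, Algebra.linearMap_apply, Algebra.algebraMap_eq_smul_one]
  calc ∑ i ∈ (Coalgebra.Repr.arbitrary K a).index,
        (Coalgebra.counit (R := K) ((Coalgebra.Repr.arbitrary K a).left i) • (1 : A)) *
          f ((Coalgebra.Repr.arbitrary K a).right i)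
      = f (∑ i ∈ (Coalgebra.Repr.arbitrary K a).index,
          Coalgebra.counit (R := K) ((Coalgebra.Repr.arbitrary K a).left i) •
            (Coalgebra.Repr.arbitrary K a).right i) := by
        rw [map_sum]
        refine Finset.sum_congr rfl fun i _ => ?_
        rw [map_smul, smul_mul_assoc, one_mul]
    _ = f a := by rw [_root_.sum_counit_smul]

lemma convH_assoc {A : Type u} [Ring A] [Algebra K A] (f g h : H →ₗ[K] A) :
    convH K f (convH K g h) = convH K (convH K f g) h := by
  ext a
  set ra := Coalgebra.Repr.arbitrary K a with hra
  set rL := fun i => Coalgebra.Repr.arbitrary K (ra.left i) with hrL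
  set rR := fun i => Coalgebra.Repr.arbitrary K (ra.right i) with hrR
  have key := Coalgebra.sum_tmul_tmul_eq (R := K) ra rL rR
  have key2 := congrArg (LinearMap.mul' K A ∘ₗ (LinearMap.mul' K A).lTensor A ∘ₗ
      TensorProduct.map f (TensorProduct.map g h)) key
  simp only [map_sum, LinearMap.comp_apply, TensorProduct.map_tmul, LinearMap.lTensor_tmul,
    LinearMap.mul'_apply] at key2
  rw [convH_repr f _ ra, convH_repr _ h ra]
  calc ∑ i ∈ ra.index, f (ra.left i) * convH K g h (ra.right i)
      = ∑ i ∈ ra.index, ∑ j ∈ (rR i).index,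
          f (ra.left i) * (g ((rR i).left j) * h ((rR i).right j)) := by
        refine Finset.sum_congr rfl fun i _ => ?_
        rw [convH_repr g h (rR i), Finset.mul_sum]
    _ = ∑ i ∈ ra.index, ∑ j ∈ (rL i).index,
          f ((rL i).left j) * (g ((rL i).right j) * h (ra.right i)) := key2.symm
    _ = ∑ i ∈ ra.index, convH K f g (ra.left i) * h (ra.right i) := by
        refine Finset.sum_congr rfl fun i _ => ?_
        rw [convH_repr f g (rL i), Finset.sum_mul]
        exact Finset.sum_congr rfl fun j _ => (mul_assoc _ _ _).symm

lemma convH_id_antipode :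
    convH K (LinearMap.id : H →ₗ[K] H) (HopfAlgebra.antipode (R := K)) =
      Algebra.linearMap K H ∘ₗ Coalgebra.counit := by
  ext a
  rw [convH_repr _ _ (Coalgebra.Repr.arbitrary K a)]
  simp only [LinearMap.id_coe, id_eq, LinearMap.comp_apply, Algebra.linearMap_apply,
    Algebra.algebraMap_eq_smul_one]
  exact HopfAlgebra.sum_mul_antipode_eq_smul (Coalgebra.Repr.arbitrary K a)

lemma convH_comul_comp (f g : H →ₗ[K] H) :
    convH K (Coalgebra.comul ∘ₗ f) (Coalgebra.comul ∘ₗ g) =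
      Coalgebra.comul ∘ₗ convH K f g := by
  ext a
  rw [convH_repr _ _ (Coalgebra.Repr.arbitrary K a), LinearMap.comp_apply,
    convH_repr f g (Coalgebra.Repr.arbitrary K a), map_sum]
  exact Finset.sum_congr rfl fun i _ => (Bialgebra.comul_mul _ _).symm

/-- Four-fold coassociativity. -/
lemma delta4 {a : H} (ra : Coalgebra.Repr K a ιx4)
    (rL : ∀ i, Coalgebra.Repr K (ra.left i) ιx5)
    (rR : ∀ i, Coalgebra.Repr K (ra.right i) ιx6)
    (rRL : ∀ i k, Coalgebra.Repr K ((rR i).left k) ιx7) :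
    ∑ i ∈ ra.index, ∑ j ∈ (rL i).index, ∑ k ∈ (rR i).index,
      (rL i).left j ⊗ₜ[K] ((rL i).right j ⊗ₜ[K] ((rR i).left k ⊗ₜ[K] (rR i).right k))
    = ∑ i ∈ ra.index, ∑ k ∈ (rR i).index, ∑ m ∈ (rRL i k).index,
      ra.left i ⊗ₜ[K] ((rRL i k).left m ⊗ₜ[K] ((rRL i k).right m ⊗ₜ[K] (rR i).right k)) := by
  set rRR := fun i k => Coalgebra.Repr.arbitrary K ((rR i).right k) with hrRR
  have key := Coalgebra.sum_tmul_tmul_eq (R := K) ra rL rR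
  have key2 := congrArg (TensorProduct.map (LinearMap.id (M := H))
      (TensorProduct.map (LinearMap.id (M := H)) (Coalgebra.comul (R := K) (A := H)))) key
  simp only [map_sum, TensorProduct.map_tmul, LinearMap.id_coe, id_eq] at key2
  calc ∑ i ∈ ra.index, ∑ j ∈ (rL i).index, ∑ k ∈ (rR i).index,
        (rL i).left j ⊗ₜ[K] ((rL i).right j ⊗ₜ[K] ((rR i).left k ⊗ₜ[K] (rR i).right k))
      = ∑ i ∈ ra.index, ∑ j ∈ (rL i).index,
          (rL i).left j ⊗ₜ[K] ((rL i).right j ⊗ₜ[K] Coalgebra.comul (R := K) (ra.right i)) := by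
        refine Finset.sum_congr rfl fun i _ => Finset.sum_congr rfl fun j _ => ?_
        rw [← (rR i).eq, TensorProduct.tmul_sum, TensorProduct.tmul_sum]
    _ = ∑ i ∈ ra.index, ∑ k ∈ (rR i).index,
          ra.left i ⊗ₜ[K] ((rR i).left k ⊗ₜ[K] Coalgebra.comul (R := K) ((rR i).right k)) := key2
    _ = ∑ i ∈ ra.index, ∑ k ∈ (rR i).index, ∑ m ∈ (rRR i k).index,
          ra.left i ⊗ₜ[K] ((rR i).left k ⊗ₜ[K] ((rRR i k).left m ⊗ₜ[K] (rRR i k).right m)) := by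
        refine Finset.sum_congr rfl fun i _ => Finset.sum_congr rfl fun k _ => ?_
        rw [← (rRR i k).eq, TensorProduct.tmul_sum, TensorProduct.tmul_sum]
    _ = ∑ i ∈ ra.index, ∑ k ∈ (rR i).index, ∑ m ∈ (rRL i k).index,
          ra.left i ⊗ₜ[K] ((rRL i k).left m ⊗ₜ[K] ((rRL i k).right m ⊗ₜ[K] (rR i).right k)) := by
        refine Finset.sum_congr rfl fun i _ => ?_
        have inner := Coalgebra.sum_tmul_tmul_eq (R := K) (rR i) (rRL i) (rRR i)
        have := congrArg (fun t => ra.left i ⊗ₜ[K] t) inner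
        simpa [TensorProduct.tmul_sum] using this.symm

lemma convH_comul_comulAntipode :
    convH K (Coalgebra.comul (R := K) (A := H))
        (Coalgebra.comul ∘ₗ HopfAlgebra.antipode (R := K)) =
      Algebra.linearMap K (H ⊗[K] H) ∘ₗ Coalgebra.counit := by
  have h := convH_comul_comp (K := K) (H := H) LinearMap.id (HopfAlgebra.antipode (R := K))
  rw [LinearMap.comp_id] at h
  rw [h, convH_id_antipode]
  ext a
  simp [Algebra.algebraMap_eq_smul_one]

lemma convH_antiG_comul :
    convH K ((TensorProduct.comm K H H).toLinearMap ∘ₗ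
        TensorProduct.map (HopfAlgebra.antipode (R := K)) (HopfAlgebra.antipode (R := K)) ∘ₗ
          Coalgebra.comul)
      (Coalgebra.comul (R := K) (A := H)) =
      Algebra.linearMap K (H ⊗[K] H) ∘ₗ Coalgebra.counit := by
  ext a
  set S : H →ₗ[K] H := HopfAlgebra.antipode (R := K) with hS
  set ra := Coalgebra.Repr.arbitrary K a with hra
  set rL := fun i => Coalgebra.Repr.arbitrary K (ra.left i) with hrL
  set rR := fun i => Coalgebra.Repr.arbitrary K (ra.right i) with hrR
  set rRL := fun i k => Coalgebra.Repr.arbitrary K ((rR i).left k) with hrRL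
  have key := congrArg (TensorProduct.map (LinearMap.mul' K H) (LinearMap.mul' K H) ∘ₗ
      (TensorProduct.tensorTensorTensorComm K H H H H).toLinearMap ∘ₗ
        TensorProduct.map (TensorProduct.comm K H H).toLinearMap LinearMap.id ∘ₗ
          (TensorProduct.assoc K H H (H ⊗[K] H)).symm.toLinearMap ∘ₗ
            TensorProduct.map S (TensorProduct.map S (LinearMap.id (M := H ⊗[K] H))))
    (delta4 ra rL rR rRL)
  simp only [map_sum, LinearMap.comp_apply, TensorProduct.map_tmul, LinearMap.id_coe, id_eq,
    LinearEquiv.coe_coe, TensorProduct.assoc_symm_tmul, TensorProduct.comm_tmul,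
    TensorProduct.tensorTensorTensorComm_tmul, LinearMap.mul'_apply] at key
  rw [convH_repr _ _ ra, LinearMap.comp_apply, Algebra.linearMap_apply,
    Algebra.algebraMap_eq_smul_one]
  calc ∑ i ∈ ra.index,
        ((TensorProduct.comm K H H).toLinearMap ∘ₗ TensorProduct.map S S ∘ₗ Coalgebra.comul)
            (ra.left i) * Coalgebra.comul (R := K) (ra.right i)
      = ∑ i ∈ ra.index, ∑ j ∈ (rL i).index, ∑ k ∈ (rR i).index,
          (S ((rL i).right j) * (rR i).left k) ⊗ₜ[K] (S ((rL i).left j) * (rR i).right k) := by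
        refine Finset.sum_congr rfl fun i _ => ?_
        rw [LinearMap.comp_apply, LinearMap.comp_apply, ← (rL i).eq, ← (rR i).eq]
        simp only [map_sum, TensorProduct.map_tmul, LinearEquiv.coe_coe,
          TensorProduct.comm_tmul]
        rw [Finset.sum_mul]
        refine Finset.sum_congr rfl fun j _ => ?_
        rw [Finset.mul_sum]
        refine Finset.sum_congr rfl fun k _ => ?_
        rw [Algebra.TensorProduct.tmul_mul_tmul]
    _ = ∑ i ∈ ra.index, ∑ k ∈ (rR i).index, ∑ m ∈ (rRL i k).index,
          (S ((rRL i k).left m) * (rRL i k).right m) ⊗ₜ[K] (S (ra.left i) * (rR i).right k) :=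
        key
    _ = ∑ i ∈ ra.index, 1 ⊗ₜ[K] (S (ra.left i) * ra.right i) := by
        refine Finset.sum_congr rfl fun i _ => ?_
        calc ∑ k ∈ (rR i).index, ∑ m ∈ (rRL i k).index,
              (S ((rRL i k).left m) * (rRL i k).right m) ⊗ₜ[K] (S (ra.left i) * (rR i).right k)
            = ∑ k ∈ (rR i).index,
                Coalgebra.counit (R := K) ((rR i).left k) •
                  ((1 : H) ⊗ₜ[K] (S (ra.left i) * (rR i).right k)) := by
              refine Finset.sum_congr rfl fun k _ => ?_
              rw [← TensorProduct.sum_tmul, HopfAlgebra.sum_antipode_mul_eq_smul (rRL i k)]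
              exact (TensorProduct.smul_tmul' _ _ _).symm
          _ = (1 : H) ⊗ₜ[K] ∑ k ∈ (rR i).index,
                Coalgebra.counit (R := K) ((rR i).left k) • (S (ra.left i) * (rR i).right k) := by
              rw [TensorProduct.tmul_sum]
              exact Finset.sum_congr rfl fun k _ => (TensorProduct.tmul_smul _ _ _).symm
          _ = (1 : H) ⊗ₜ[K] (S (ra.left i) * ra.right i) := by
              congr 1
              calc ∑ k ∈ (rR i).index,
                    Coalgebra.counit (R := K) ((rR i).left k) • (S (ra.left i) * (rR i).right k)
                  = S (ra.left i) * ∑ k ∈ (rR i).index,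
                      Coalgebra.counit (R := K) ((rR i).left k) • (rR i).right k := by
                    rw [Finset.mul_sum]
                    exact Finset.sum_congr rfl fun k _ => (mul_smul_comm _ _ _).symm
                _ = S (ra.left i) * ra.right i := by rw [_root_.sum_counit_smul]
    _ = Coalgebra.counit (R := K) a • (1 : H ⊗[K] H) := by
        rw [← TensorProduct.tmul_sum, HopfAlgebra.sum_antipode_mul_eq_smul ra,
          TensorProduct.tmul_smul, Algebra.TensorProduct.one_def]

lemma comul_antipode :
    Coalgebra.comul ∘ₗ HopfAlgebra.antipode (R := K) (A := H) =
      (TensorProduct.comm K H H).toLinearMap ∘ₗ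
        TensorProduct.map (HopfAlgebra.antipode (R := K)) (HopfAlgebra.antipode (R := K)) ∘ₗ
          Coalgebra.comul := by
  set G : H →ₗ[K] H ⊗[K] H := (TensorProduct.comm K H H).toLinearMap ∘ₗ
    TensorProduct.map (HopfAlgebra.antipode (R := K)) (HopfAlgebra.antipode (R := K)) ∘ₗ
      Coalgebra.comul with hG
  calc Coalgebra.comul ∘ₗ HopfAlgebra.antipode (R := K) (A := H)
      = convH K (Algebra.linearMap K (H ⊗[K] H) ∘ₗ Coalgebra.counit)
          (Coalgebra.comul ∘ₗ HopfAlgebra.antipode (R := K)) := (convH_unit_left _).symm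
    _ = convH K (convH K G (Coalgebra.comul (R := K) (A := H)))
          (Coalgebra.comul ∘ₗ HopfAlgebra.antipode (R := K)) := by rw [convH_antiG_comul]
    _ = convH K G (convH K (Coalgebra.comul (R := K) (A := H))
          (Coalgebra.comul ∘ₗ HopfAlgebra.antipode (R := K))) := (convH_assoc _ _ _).symm
    _ = convH K G (Algebra.linearMap K (H ⊗[K] H) ∘ₗ Coalgebra.counit) := by
        rw [convH_comul_comulAntipode]
    _ = G := convH_unit_right _

lemma comul_antipode_repr {a : H} (ra : Coalgebra.Repr K a ιx8) :
    Coalgebra.comul (R := K) (HopfAlgebra.antipode (R := K) a) =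
      ∑ i ∈ ra.index, HopfAlgebra.antipode (R := K) (ra.right i) ⊗ₜ[K]
        HopfAlgebra.antipode (R := K) (ra.left i) := by
  have h := LinearMap.congr_fun (comul_antipode (K := K) (H := H)) a
  simp only [LinearMap.comp_apply] at h
  rw [h, ← ra.eq]
  simp [map_sum]

lemma tAntipode_repr (γ' : H →ₗ[K] K) {a : H} (ra : Coalgebra.Repr K a ιx9) :
    tAntipode K H γ' a =
      ∑ i ∈ ra.index, γ' (ra.right i) • HopfAlgebra.antipode (R := K) (ra.left i) := by
  rw [tAntipode, convH_repr _ _ ra]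
  refine Finset.sum_congr rfl fun i _ => ?_
  simp [Algebra.algebraMap_eq_smul_one, mul_smul_comm]

lemma comul_tAntipode_repr (γ' : H →ₗ[K] K) {a : H} (ra : Coalgebra.Repr K a ιx10) :
    Coalgebra.comul (R := K) (tAntipode K H γ' a) =
      ∑ i ∈ ra.index, tAntipode K H γ' (ra.right i) ⊗ₜ[K]
        HopfAlgebra.antipode (R := K) (ra.left i) := by
  set rL := fun i => Coalgebra.Repr.arbitrary K (ra.left i) with hrL
  set rR := fun i => Coalgebra.Repr.arbitrary K (ra.right i) with hrR
  have key := congrArg (TensorProduct.map (LinearMap.id (M := H))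
      (TensorProduct.lid K H).toLinearMap ∘ₗ
    TensorProduct.map (HopfAlgebra.antipode (R := K))
      (TensorProduct.map γ' (HopfAlgebra.antipode (R := K))) ∘ₗ
    (TensorProduct.assoc K H H H).toLinearMap ∘ₗ
    (TensorProduct.comm K H (H ⊗[K] H)).toLinearMap)
    (Coalgebra.sum_tmul_tmul_eq (R := K) ra rL rR)
  simp only [map_sum, LinearMap.comp_apply, LinearEquiv.coe_coe, TensorProduct.comm_tmul,
    TensorProduct.assoc_tmul, TensorProduct.map_tmul, LinearMap.id_coe, id_eq,
    TensorProduct.lid_tmul] at key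
  calc Coalgebra.comul (R := K) (tAntipode K H γ' a)
      = ∑ i ∈ ra.index, ∑ j ∈ (rL i).index,
          HopfAlgebra.antipode (R := K) ((rL i).right j) ⊗ₜ[K]
            (γ' (ra.right i) • HopfAlgebra.antipode (R := K) ((rL i).left j)) := by
        rw [tAntipode_repr γ' ra, map_sum]
        refine Finset.sum_congr rfl fun i _ => ?_
        rw [map_smul, comul_antipode_repr (rL i), Finset.smul_sum]
        exact Finset.sum_congr rfl fun j _ => (TensorProduct.tmul_smul _ _ _).symm
    _ = ∑ i ∈ ra.index, ∑ k ∈ (rR i).index,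
          HopfAlgebra.antipode (R := K) ((rR i).left k) ⊗ₜ[K]
            (γ' ((rR i).right k) • HopfAlgebra.antipode (R := K) (ra.left i)) := key
    _ = ∑ i ∈ ra.index, tAntipode K H γ' (ra.right i) ⊗ₜ[K]
          HopfAlgebra.antipode (R := K) (ra.left i) := by
        refine Finset.sum_congr rfl fun i _ => ?_
        rw [tAntipode_repr γ' (rR i), TensorProduct.sum_tmul]
        refine Finset.sum_congr rfl fun k _ => ?_
        rw [TensorProduct.smul_tmul, TensorProduct.tmul_smul]

lemma aMul_tmul_repr (α : H ⊗[K] H →ₗ[K] K) {a b : H}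
    (ra : Coalgebra.Repr K a ιx11) (rb : Coalgebra.Repr K b ιx12) :
    aMul K H α (a ⊗ₜ[K] b) = ∑ i ∈ ra.index, ∑ j ∈ rb.index,
      α (ra.left i ⊗ₜ[K] rb.left j) • (ra.right i * rb.right j) := by
  have hc : (Coalgebra.comul (R := K) (A := H ⊗[K] H)) (a ⊗ₜ[K] b) =
      ∑ i ∈ ra.index, ∑ j ∈ rb.index,
        (ra.left i ⊗ₜ[K] rb.left j) ⊗ₜ[K] (ra.right i ⊗ₜ[K] rb.right j) := by
    have h0 : (Coalgebra.comul (R := K) (A := H ⊗[K] H)) (a ⊗ₜ[K] b) =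
        TensorProduct.tensorTensorTensorComm K H H H H
          (Coalgebra.comul (R := K) a ⊗ₜ[K] Coalgebra.comul (R := K) b) := by
      simp [TensorProduct.comul_def, AlgebraTensorModule.tensorTensorTensorComm_eq]
    rw [h0, ← ra.eq, ← rb.eq]
    simp [TensorProduct.sum_tmul, TensorProduct.tmul_sum, map_sum]
    rw [Finset.sum_comm]
  rw [aMul, convH, LinearMap.comp_apply, LinearMap.comp_apply, hc]
  simp [map_sum, Algebra.algebraMap_eq_smul_one, smul_mul_assoc]

lemma comul_aMul_repr (α : H ⊗[K] H →ₗ[K] K) {a b : H}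
    (ra : Coalgebra.Repr K a ιx13) (rb : Coalgebra.Repr K b ιx14) :
    Coalgebra.comul (R := K) (aMul K H α (a ⊗ₜ[K] b)) =
      ∑ i ∈ ra.index, ∑ j ∈ rb.index,
        aMul K H α (ra.left i ⊗ₜ[K] rb.left j) ⊗ₜ[K] (ra.right i * rb.right j) := by
  set rLa := fun i => Coalgebra.Repr.arbitrary K (ra.left i) with hrLa
  set rRa := fun i => Coalgebra.Repr.arbitrary K (ra.right i) with hrRa
  set rLb := fun j => Coalgebra.Repr.arbitrary K (rb.left j) with hrLb
  set rRb := fun j => Coalgebra.Repr.arbitrary K (rb.right j) with hrRb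
  have kAB : (∑ i ∈ ra.index, ∑ j ∈ (rLa i).index,
        (rLa i).left j ⊗ₜ[K] ((rLa i).right j ⊗ₜ[K] ra.right i)) ⊗ₜ[K]
      (∑ m ∈ rb.index, ∑ n ∈ (rLb m).index,
        (rLb m).left n ⊗ₜ[K] ((rLb m).right n ⊗ₜ[K] rb.right m)) =
      (∑ i ∈ ra.index, ∑ s ∈ (rRa i).index,
        ra.left i ⊗ₜ[K] ((rRa i).left s ⊗ₜ[K] (rRa i).right s)) ⊗ₜ[K]
      (∑ m ∈ rb.index, ∑ t ∈ (rRb m).index,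
        rb.left m ⊗ₜ[K] ((rRb m).left t ⊗ₜ[K] (rRb m).right t)) := by
    rw [Coalgebra.sum_tmul_tmul_eq (R := K) ra rLa rRa,
      Coalgebra.sum_tmul_tmul_eq (R := K) rb rLb rRb]
  have key := congrArg ((TensorProduct.lid K (H ⊗[K] H)).toLinearMap ∘ₗ
      TensorProduct.map α
        (TensorProduct.map (LinearMap.mul' K H) (LinearMap.mul' K H) ∘ₗ
          (TensorProduct.tensorTensorTensorComm K H H H H).toLinearMap) ∘ₗ
      (TensorProduct.tensorTensorTensorComm K H (H ⊗[K] H) H (H ⊗[K] H)).toLinearMap) kAB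
  simp only [map_sum, TensorProduct.sum_tmul, TensorProduct.tmul_sum, LinearMap.comp_apply,
    LinearEquiv.coe_coe, TensorProduct.tensorTensorTensorComm_tmul, TensorProduct.map_tmul,
    LinearMap.mul'_apply, TensorProduct.lid_tmul] at key
  have e1 : Coalgebra.comul (R := K) (aMul K H α (a ⊗ₜ[K] b)) =
      ∑ m ∈ rb.index, ∑ t ∈ (rRb m).index, ∑ i ∈ ra.index, ∑ s ∈ (rRa i).index,
        α (ra.left i ⊗ₜ[K] rb.left m) •
          (((rRa i).left s * (rRb m).left t) ⊗ₜ[K] ((rRa i).right s * (rRb m).right t)) := by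
    rw [aMul_tmul_repr α ra rb]
    simp only [map_sum, map_smul]
    calc ∑ i ∈ ra.index, ∑ m ∈ rb.index,
          α (ra.left i ⊗ₜ[K] rb.left m) • Coalgebra.comul (R := K) (ra.right i * rb.right m)
        = ∑ i ∈ ra.index, ∑ m ∈ rb.index, ∑ t ∈ (rRb m).index, ∑ s ∈ (rRa i).index,
            α (ra.left i ⊗ₜ[K] rb.left m) •
              (((rRa i).left s * (rRb m).left t) ⊗ₜ[K] ((rRa i).right s * (rRb m).right t)) := by
          refine Finset.sum_congr rfl fun i _ => Finset.sum_congr rfl fun m _ => ?_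
          rw [Bialgebra.comul_mul, ← (rRa i).eq, ← (rRb m).eq, Finset.sum_mul_sum]
          simp only [Algebra.TensorProduct.tmul_mul_tmul, Finset.smul_sum]
          exact Finset.sum_comm
      _ = ∑ m ∈ rb.index, ∑ i ∈ ra.index, ∑ t ∈ (rRb m).index, ∑ s ∈ (rRa i).index,
            α (ra.left i ⊗ₜ[K] rb.left m) •
              (((rRa i).left s * (rRb m).left t) ⊗ₜ[K] ((rRa i).right s * (rRb m).right t)) :=
          Finset.sum_comm
      _ = ∑ m ∈ rb.index, ∑ t ∈ (rRb m).index, ∑ i ∈ ra.index, ∑ s ∈ (rRa i).index,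
            α (ra.left i ⊗ₜ[K] rb.left m) •
              (((rRa i).left s * (rRb m).left t) ⊗ₜ[K] ((rRa i).right s * (rRb m).right t)) :=
          Finset.sum_congr rfl fun m _ => Finset.sum_comm
  have e2 : (∑ i ∈ ra.index, ∑ m ∈ rb.index,
        aMul K H α (ra.left i ⊗ₜ[K] rb.left m) ⊗ₜ[K] (ra.right i * rb.right m)) =
      ∑ m ∈ rb.index, ∑ n ∈ (rLb m).index, ∑ i ∈ ra.index, ∑ j ∈ (rLa i).index,
        α ((rLa i).left j ⊗ₜ[K] (rLb m).left n) •
          (((rLa i).right j * (rLb m).right n) ⊗ₜ[K] (ra.right i * rb.right m)) := by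
    calc ∑ i ∈ ra.index, ∑ m ∈ rb.index,
          aMul K H α (ra.left i ⊗ₜ[K] rb.left m) ⊗ₜ[K] (ra.right i * rb.right m)
        = ∑ i ∈ ra.index, ∑ m ∈ rb.index, ∑ n ∈ (rLb m).index, ∑ j ∈ (rLa i).index,
            α ((rLa i).left j ⊗ₜ[K] (rLb m).left n) •
              (((rLa i).right j * (rLb m).right n) ⊗ₜ[K] (ra.right i * rb.right m)) := by
          refine Finset.sum_congr rfl fun i _ => Finset.sum_congr rfl fun m _ => ?_
          rw [aMul_tmul_repr α (rLa i) (rLb m)]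
          simp only [TensorProduct.sum_tmul, TensorProduct.smul_tmul']
          exact Finset.sum_comm
      _ = ∑ m ∈ rb.index, ∑ i ∈ ra.index, ∑ n ∈ (rLb m).index, ∑ j ∈ (rLa i).index,
            α ((rLa i).left j ⊗ₜ[K] (rLb m).left n) •
              (((rLa i).right j * (rLb m).right n) ⊗ₜ[K] (ra.right i * rb.right m)) :=
          Finset.sum_comm
      _ = ∑ m ∈ rb.index, ∑ n ∈ (rLb m).index, ∑ i ∈ ra.index, ∑ j ∈ (rLa i).index,
            α ((rLa i).left j ⊗ₜ[K] (rLb m).left n) •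
              (((rLa i).right j * (rLb m).right n) ⊗ₜ[K] (ra.right i * rb.right m)) :=
          Finset.sum_congr rfl fun m _ => Finset.sum_comm
  rw [e1, ← key]
  exact e2.symm

/-- `Repr` for the comultiplication of a twisted antipode value. -/
noncomputable def tRepr (γ' : H →ₗ[K] K) {a : H} (ra : Coalgebra.Repr K a ιT) :
    Coalgebra.Repr K (tAntipode K H γ' a) ιT where
  index := ra.index
  left := fun i => tAntipode K H γ' (ra.right i)
  right := fun i => HopfAlgebra.antipode (R := K) (ra.left i)
  eq := (comul_tAntipode_repr γ' ra).symm

/-- `Repr` for the comultiplication of an `aMul` value. -/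
noncomputable def aRepr (α : H ⊗[K] H →ₗ[K] K) {a b : H}
    (ra : Coalgebra.Repr K a ιA) (rb : Coalgebra.Repr K b ιB) :
    Coalgebra.Repr K (aMul K H α (a ⊗ₜ[K] b)) (ιA × ιB) where
  index := ra.index ×ˢ rb.index
  left := fun p => aMul K H α (ra.left p.1 ⊗ₜ[K] rb.left p.2)
  right := fun p => ra.right p.1 * rb.right p.2
  eq := by rw [Finset.sum_product]; exact (comul_aMul_repr α ra rb).symm

lemma ydAct_tmul_repr (α : H ⊗[K] H →ₗ[K] K) (γ' : H →ₗ[K] K) (x : H) {h : H}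
    (rh : Coalgebra.Repr K h ιx15) :
    ydAct K H α γ' (x ⊗ₜ[K] h) = ∑ i ∈ rh.index,
      aMul K H α (aMul K H α (tAntipode K H γ' (rh.left i) ⊗ₜ[K] x) ⊗ₜ[K] rh.right i) := by
  rw [ydAct]
  simp only [LinearMap.comp_apply, TensorProduct.map_tmul, LinearMap.id_coe, id_eq, ← rh.eq,
    map_sum, TensorProduct.tmul_sum, LinearEquiv.coe_coe, TensorProduct.assoc_symm_tmul,
    TensorProduct.comm_tmul]

lemma comul_ydAct_repr (α : H ⊗[K] H →ₗ[K] K) (γ' : H →ₗ[K] K) {x h : H}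
    (rx : Coalgebra.Repr K x ιx16) (rh : Coalgebra.Repr K h ιx17)
    (rhL : ∀ i, Coalgebra.Repr K (rh.left i) ιx18) (rhR : ∀ i, Coalgebra.Repr K (rh.right i) ιx19) :
    Coalgebra.comul (R := K) (ydAct K H α γ' (x ⊗ₜ[K] h)) =
      ∑ i ∈ rh.index, ∑ j ∈ (rhL i).index, ∑ m ∈ rx.index, ∑ k ∈ (rhR i).index,
        aMul K H α (aMul K H α
            (tAntipode K H γ' ((rhL i).right j) ⊗ₜ[K] rx.left m) ⊗ₜ[K] (rhR i).left k) ⊗ₜ[K]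
          ((HopfAlgebra.antipode (R := K) ((rhL i).left j) * rx.right m) * (rhR i).right k) := by
  rw [ydAct_tmul_repr α γ' x rh, map_sum]
  refine Finset.sum_congr rfl fun i _ => ?_
  rw [comul_aMul_repr α (aRepr α (tRepr γ' (rhL i)) rx) (rhR i)]
  simp only [aRepr, tRepr]
  rw [Finset.sum_product]

lemma sum4_swap {M : Type*} [AddCommMonoid M] {ι₁ ιm : Type*} {κ : ι₁ → Type*}
    {ρ : ∀ i, κ i → Type*}
    (s₁ : Finset ι₁) (s₂ : ∀ i, Finset (κ i)) (s₃ : ∀ i j, Finset (ρ i j)) (t : Finset ιm)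
    (f : ∀ i (j : κ i), ρ i j → ιm → M) :
    ∑ i ∈ s₁, ∑ j ∈ s₂ i, ∑ k ∈ s₃ i j, ∑ m ∈ t, f i j k m
      = ∑ m ∈ t, ∑ i ∈ s₁, ∑ j ∈ s₂ i, ∑ k ∈ s₃ i j, f i j k m := by
  calc ∑ i ∈ s₁, ∑ j ∈ s₂ i, ∑ k ∈ s₃ i j, ∑ m ∈ t, f i j k m
      = ∑ i ∈ s₁, ∑ j ∈ s₂ i, ∑ m ∈ t, ∑ k ∈ s₃ i j, f i j k m :=
        Finset.sum_congr rfl fun i _ => Finset.sum_congr rfl fun j _ => Finset.sum_comm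
    _ = ∑ i ∈ s₁, ∑ m ∈ t, ∑ j ∈ s₂ i, ∑ k ∈ s₃ i j, f i j k m :=
        Finset.sum_congr rfl fun i _ => Finset.sum_comm
    _ = ∑ m ∈ t, ∑ i ∈ s₁, ∑ j ∈ s₂ i, ∑ k ∈ s₃ i j, f i j k m := Finset.sum_comm

end Aux

set_option maxHeartbeats 1000000 in
/-- `Δ(x · h) = (x₁ · h₂) ⊗ S(h₁)x₂h₃`, i.e. `^αH` with the action
`x · h = S̃(h₁) ·_α x ·_α h₂` and coaction `Δ` is a Yetter–Drinfeld module over `H`. -/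
theorem cocycle_deformation_yetter_drinfeld
    (K H : Type u) [Field K] [CharZero K] [Ring H] [HopfAlgebra K H]
    [FiniteDimensional K H]
    (α : H ⊗[K] H →ₗ[K] K) (hα : IsHopfCocycle K H α)
    (γ' : H →ₗ[K] K)
    (hγ' : convH K (cocycleGamma K H α) γ' = Coalgebra.counit ∧
           convH K γ' (cocycleGamma K H α) = Coalgebra.counit) :
    Coalgebra.comul ∘ₗ ydAct K H α γ' =
      TensorProduct.map (ydAct K H α γ')
          (LinearMap.mul' K H ∘ₗ
            TensorProduct.map (HopfAlgebra.antipode (R := K)) (LinearMap.mul' K H)) ∘ₗ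
        ydPerm K H ∘ₗ
          TensorProduct.map Coalgebra.comul
            (TensorProduct.map LinearMap.id Coalgebra.comul ∘ₗ Coalgebra.comul) := by
  apply TensorProduct.ext'
  intro x h
  set rx := Coalgebra.Repr.arbitrary K x with hrx
  set rh := Coalgebra.Repr.arbitrary K h with hrh
  set rhL := fun i => Coalgebra.Repr.arbitrary K (rh.left i) with hrhL
  set rhR := fun i => Coalgebra.Repr.arbitrary K (rh.right i) with hrhR
  set rhRL := fun i k => Coalgebra.Repr.arbitrary K ((rhR i).left k) with hrhRL
  have s1 : TensorProduct.map (Coalgebra.comul (R := K) (A := H))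
      (TensorProduct.map LinearMap.id Coalgebra.comul ∘ₗ Coalgebra.comul) (x ⊗ₜ[K] h) =
      ∑ m ∈ rx.index, ∑ i ∈ rh.index, ∑ k ∈ (rhR i).index,
        (rx.left m ⊗ₜ[K] rx.right m) ⊗ₜ[K]
          (rh.left i ⊗ₜ[K] ((rhR i).left k ⊗ₜ[K] (rhR i).right k)) := by
    simp only [TensorProduct.map_tmul, LinearMap.comp_apply]
    rw [← rx.eq, ← rh.eq, map_sum, TensorProduct.sum_tmul]
    refine Finset.sum_congr rfl fun m _ => ?_
    simp only [TensorProduct.map_tmul, LinearMap.id_coe, id_eq]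
    rw [TensorProduct.tmul_sum]
    refine Finset.sum_congr rfl fun i _ => ?_
    rw [← (rhR i).eq, TensorProduct.tmul_sum, TensorProduct.tmul_sum]
  have hR : (TensorProduct.map (ydAct K H α γ')
        (LinearMap.mul' K H ∘ₗ
          TensorProduct.map (HopfAlgebra.antipode (R := K)) (LinearMap.mul' K H)) ∘ₗ
      ydPerm K H ∘ₗ
        TensorProduct.map Coalgebra.comul
          (TensorProduct.map LinearMap.id Coalgebra.comul ∘ₗ Coalgebra.comul)) (x ⊗ₜ[K] h) =
      ∑ m ∈ rx.index, ∑ i ∈ rh.index, ∑ k ∈ (rhR i).index, ∑ p ∈ (rhRL i k).index,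
        aMul K H α (aMul K H α
            (tAntipode K H γ' ((rhRL i k).left p) ⊗ₜ[K] rx.left m) ⊗ₜ[K] (rhRL i k).right p) ⊗ₜ[K]
          (HopfAlgebra.antipode (R := K) (rh.left i) *
            (rx.right m * (rhR i).right k)) := by
    rw [LinearMap.comp_apply, LinearMap.comp_apply, s1]
    simp only [map_sum]
    refine Finset.sum_congr rfl fun m _ => Finset.sum_congr rfl fun i _ =>
      Finset.sum_congr rfl fun k _ => ?_
    rw [ydPerm]
    simp only [LinearMap.comp_apply, LinearEquiv.coe_coe,
      TensorProduct.tensorTensorTensorComm_tmul, TensorProduct.map_tmul, LinearMap.id_coe,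
      id_eq, TensorProduct.assoc_symm_tmul, TensorProduct.comm_tmul, TensorProduct.assoc_tmul,
      LinearMap.mul'_apply]
    rw [ydAct_tmul_repr α γ' (rx.left m) (rhRL i k), TensorProduct.sum_tmul]
  rw [LinearMap.comp_apply, comul_ydAct_repr α γ' rx rh rhL rhR, hR]
  have key := congrArg (fun t => (TensorProduct.map
      ((aMul K H α ∘ₗ TensorProduct.map (aMul K H α) LinearMap.id) ∘ₗ
        TensorProduct.map (TensorProduct.comm K H H).toLinearMap LinearMap.id ∘ₗ
          (TensorProduct.assoc K H H H).symm.toLinearMap)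
      ((LinearMap.mul' K H ∘ₗ TensorProduct.map LinearMap.id (LinearMap.mul' K H)) ∘ₗ
        (TensorProduct.assoc K H H H).toLinearMap ∘ₗ
          TensorProduct.map (TensorProduct.comm K H H).toLinearMap LinearMap.id ∘ₗ
            (TensorProduct.assoc K H H H).symm.toLinearMap) ∘ₗ
    (TensorProduct.tensorTensorTensorComm K H H (H ⊗[K] H) (H ⊗[K] H)).toLinearMap ∘ₗ
    TensorProduct.map LinearMap.id
      (((TensorProduct.tensorTensorTensorComm K H H H H).toLinearMap ∘ₗ
        TensorProduct.map (TensorProduct.comm K H H).toLinearMap LinearMap.id ∘ₗ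
          (TensorProduct.assoc K H H (H ⊗[K] H)).symm.toLinearMap) ∘ₗ
        TensorProduct.map (HopfAlgebra.antipode (R := K))
          (TensorProduct.map (tAntipode K H γ') LinearMap.id)))
      ((Coalgebra.comul (R := K) x) ⊗ₜ[K] t)) (delta4 rh rhL rhR rhRL)
  rw [← rx.eq] at key
  simp only [TensorProduct.sum_tmul, TensorProduct.tmul_sum, map_sum, LinearMap.comp_apply,
    LinearEquiv.coe_coe, TensorProduct.map_tmul, LinearMap.id_coe, id_eq,
    TensorProduct.assoc_symm_tmul, TensorProduct.comm_tmul, TensorProduct.assoc_tmul,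
    TensorProduct.tensorTensorTensorComm_tmul, LinearMap.mul'_apply] at key
  calc ∑ i ∈ rh.index, ∑ j ∈ (rhL i).index, ∑ m ∈ rx.index, ∑ k ∈ (rhR i).index,
        aMul K H α (aMul K H α
            (tAntipode K H γ' ((rhL i).right j) ⊗ₜ[K] rx.left m) ⊗ₜ[K] (rhR i).left k) ⊗ₜ[K]
          ((HopfAlgebra.antipode (R := K) ((rhL i).left j) * rx.right m) * (rhR i).right k)
      = ∑ i ∈ rh.index, ∑ j ∈ (rhL i).index, ∑ k ∈ (rhR i).index, ∑ m ∈ rx.index,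
          aMul K H α (aMul K H α
              (tAntipode K H γ' ((rhL i).right j) ⊗ₜ[K] rx.left m) ⊗ₜ[K] (rhR i).left k) ⊗ₜ[K]
            (HopfAlgebra.antipode (R := K) ((rhL i).left j) *
              (rx.right m * (rhR i).right k)) := by
        refine Finset.sum_congr rfl fun i _ => Finset.sum_congr rfl fun j _ => ?_
        simp only [mul_assoc]
        exact Finset.sum_comm
    _ = ∑ i ∈ rh.index, ∑ k ∈ (rhR i).index, ∑ p ∈ (rhRL i k).index, ∑ m ∈ rx.index,
          aMul K H α (aMul K H α
              (tAntipode K H γ' ((rhRL i k).left p) ⊗ₜ[K] rx.left m) ⊗ₜ[K] (rhRL i k).right p) ⊗ₜ[K]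
            (HopfAlgebra.antipode (R := K) (rh.left i) *
              (rx.right m * (rhR i).right k)) := key
    _ = ∑ m ∈ rx.index, ∑ i ∈ rh.index, ∑ k ∈ (rhR i).index, ∑ p ∈ (rhRL i k).index,
          aMul K H α (aMul K H α
              (tAntipode K H γ' ((rhRL i k).left p) ⊗ₜ[K] rx.left m) ⊗ₜ[K] (rhRL i k).right p) ⊗ₜ[K]
            (HopfAlgebra.antipode (R := K) (rh.left i) *
              (rx.right m * (rhR i).right k)) := sum4_swap _ _ _ _ _
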